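/- Let A be a nonempty type, C a compact topological space, ĉ : A → C a (pure) mechanism, v₀ : A → ℝ bounded above, ũ : C → ℝ continuous, and v : C → ℝᴺ continuous and injective. Then for Lebesgue-almost every λ ∈ ℝᴺ the following holds: any two actions a, a' ∈ A that both attain sup_{a'' ∈ A} [v₀(a'') + ũ(ĉ(a'')) + ⟨λ, v(ĉ(a''))⟩] satisfy ĉ(a) = ĉ(a'). -/

import Mathlib

open MeasureTheory

/-- Proposition 2(b)(ii) for pure mechanisms — with a prevalent
utility `ũ(c) + ⟨λ, v(c)⟩` over consequences (`v` injective), an action payoff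
`v₀` bounded above, and a pure mechanism `ĉ : A → C` into a compact space, for
Lebesgue-almost every `λ` any two optimal actions induce the same consequence. -/
theorem stmt8 {A : Type*} [Nonempty A] {C : Type*} [TopologicalSpace C]
    [CompactSpace C] {N : ℕ}
    (chat : A → C)
    (v₀ : A → ℝ) (hv₀ : BddAbove (Set.range v₀))
    (utilde : C → ℝ) (hutilde : Continuous utilde)
    (v : C → (Fin N → ℝ)) (hv : Continuous v) (hvinj : Function.Injective v) :
    ∀ᵐ lam : (Fin N → ℝ) ∂volume, ∀ a a' : A,
      v₀ a + utilde (chat a) + ∑ k, lam k * v (chat a) k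
        = (⨆ a'' : A, (v₀ a'' + utilde (chat a'') + ∑ k, lam k * v (chat a'') k)) →
      v₀ a' + utilde (chat a') + ∑ k, lam k * v (chat a') k
        = (⨆ a'' : A, (v₀ a'' + utilde (chat a'') + ∑ k, lam k * v (chat a'') k)) →
      chat a = chat a' := by
  classical
  obtain ⟨a0⟩ := ‹Nonempty A›
  set w : A → (Fin N → ℝ) := fun a => v (chat a) with hw
  set cst : A → ℝ := fun a => v₀ a + utilde (chat a) with hcst
  set f : A → (Fin N → ℝ) → ℝ := fun a lam => cst a + ∑ k, lam k * w a k with hf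
  set F : (Fin N → ℝ) → ℝ := fun lam => ⨆ a, f a lam with hF
  -- bound on ‖v c‖
  obtain ⟨M, hMmem⟩ := (isCompact_range (hv.norm)).bddAbove
  have hM : ∀ c : C, ‖v c‖ ≤ M := fun c => hMmem (Set.mem_range_self c)
  have hM0 : 0 ≤ M := le_trans (norm_nonneg _) (hM (chat a0))
  have hwk : ∀ (a : A) (k : Fin N), |w a k| ≤ M := fun a k =>
    le_trans (norm_le_pi_norm (w a) k) (hM (chat a))
  -- bound on cst
  obtain ⟨V, hV⟩ := hv₀
  obtain ⟨U, hUmem⟩ := (isCompact_range hutilde).bddAbove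
  have hB : ∀ a, cst a ≤ V + U := fun a =>
    add_le_add (hV (Set.mem_range_self a)) (hUmem (Set.mem_range_self (chat a)))
  -- key inner product bound
  have key : ∀ (x : Fin N → ℝ) (a : A), |∑ k, x k * w a k| ≤ N * M * ‖x‖ := by
    intro x a
    calc |∑ k, x k * w a k| ≤ ∑ k, |x k * w a k| := Finset.abs_sum_le_sum_abs _ _
      _ ≤ ∑ _k : Fin N, ‖x‖ * M := by
          refine Finset.sum_le_sum fun k _ => ?_
          rw [abs_mul]
          exact mul_le_mul (norm_le_pi_norm x k) (hwk a k) (abs_nonneg _) (norm_nonneg _)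
      _ = N * M * ‖x‖ := by simp [Finset.sum_const, Finset.card_univ]; ring
  -- boundedness of the sup
  have hbdd : ∀ lam, BddAbove (Set.range fun a => f a lam) := by
    intro lam
    refine ⟨V + U + N * M * ‖lam‖, ?_⟩
    rintro x ⟨a, rfl⟩
    have := (abs_le.1 (key lam a)).2
    simpa [hf] using add_le_add (hB a) this
  have hle : ∀ (a : A) (lam), f a lam ≤ F lam := fun a lam => le_ciSup (hbdd lam) a
  -- difference identity
  have hdiffid : ∀ (a : A) (x y : Fin N → ℝ), f a x - f a y = ∑ k, (x - y) k * w a k := by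
    intro a x y
    simp only [hf, Pi.sub_apply, sub_mul, Finset.sum_sub_distrib]
    ring
  -- Lipschitz
  have hlipR : ∀ x y, F x ≤ F y + N * M * ‖x - y‖ := by
    intro x y
    refine ciSup_le fun a => ?_
    have h1 : f a x ≤ f a y + N * M * ‖x - y‖ := by
      have := (abs_le.1 (key (x - y) a)).2
      have h2 := hdiffid a x y
      linarith [h2 ▸ this]
    exact h1.trans (by linarith [hle a y])
  have hlip : LipschitzWith (Real.toNNReal (N * M)) F := by
    refine LipschitzWith.of_dist_le_mul fun x y => ?_
    have hc : (Real.toNNReal (N * M) : ℝ) = N * M := by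
      rw [Real.coe_toNNReal]; positivity
    rw [Real.dist_eq, dist_eq_norm, hc]
    rw [abs_sub_le_iff]
    constructor
    · linarith [hlipR x y]
    · have := hlipR y x
      have : F y - F x ≤ N * M * ‖y - x‖ := by linarith
      simpa [norm_sub_rev y x, Real.norm_eq_abs] using this
  have hdiff := hlip.ae_differentiableAt (μ := (volume : Measure (Fin N → ℝ)))
  filter_upwards [hdiff] with lam hd
  -- the gradient pins down w a at any maximizer
  have grad : ∀ a : A, f a lam = F lam → ∀ dvec : Fin N → ℝ,
      fderiv ℝ F lam dvec = ∑ k, dvec k * w a k := by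
    intro a hmax dvec
    set s : ℝ := ∑ k, dvec k * w a k with hs
    set g : ℝ → ℝ := fun t => F (lam + t • dvec) - (f a lam + t * s) with hg
    have haff : ∀ t : ℝ, f a (lam + t • dvec) = f a lam + t * s := by
      intro t
      simp only [hf, hs, Pi.add_apply, Pi.smul_apply, smul_eq_mul, add_mul,
        Finset.sum_add_distrib, Finset.mul_sum]
      ring_nf
    have hgnonneg : ∀ t : ℝ, g 0 ≤ g t := by
      intro t
      have h1 : g 0 = 0 := by simp [hg, hmax]
      have h2 : 0 ≤ g t := by
        have := hle a (lam + t • dvec)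
        rw [haff t] at this
        simp only [hg]; linarith
      linarith
    have hmin : IsLocalMin g 0 := Filter.Eventually.of_forall hgnonneg
    have hline : HasDerivAt (fun t : ℝ => lam + t • dvec) dvec 0 := by
      simpa using ((hasDerivAt_id (0:ℝ)).smul_const dvec).const_add lam
    have hF1 : HasDerivAt (fun t : ℝ => F (lam + t • dvec)) (fderiv ℝ F lam dvec) 0 := by
      have h0 : HasFDerivAt F (fderiv ℝ F lam) ((fun t : ℝ => lam + t • dvec) 0) := by
        simpa using hd.hasFDerivAt
      exact h0.comp_hasDerivAt 0 hline
    have hF2 : HasDerivAt (fun t : ℝ => f a lam + t * s) s 0 := by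
      simpa using ((hasDerivAt_id (0:ℝ)).mul_const s).const_add (f a lam)
    have hgd : HasDerivAt g (fderiv ℝ F lam dvec - s) 0 := hF1.sub hF2
    have := hmin.hasDerivAt_eq_zero hgd
    linarith
  intro a a' ha ha'
  have ha1 : f a lam = F lam := ha
  have ha2 : f a' lam = F lam := ha'
  have hweq : w a = w a' := by
    funext k
    have h1 := grad a ha1 (Pi.single k 1)
    have h2 := grad a' ha2 (Pi.single k 1)
    have : (∑ j, (Pi.single k 1 : Fin N → ℝ) j * w a j) = ∑ j, (Pi.single k 1 : Fin N → ℝ) j * w a' j := by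
      rw [← h1, ← h2]
    simpa [Pi.single_apply, Finset.sum_ite_eq'] using this
  exact hvinj hweq
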